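/- Let f = h + ḡ be a pluriharmonic map on 𝔹ⁿ with h locally biholomorphic, g holomorphic, and second dilation ω_f = (conj of D̄f)·(Dh)^{-1} satisfying ‖ω_f(z)‖ ≤ κ < 1 for all z. Then |det J_f(z)| ≤ |det Dh(z)|² (1+κ²)ⁿ and |det J_f(z)| ≥ |det Dh(z)|² (1-κ²)ⁿ for all z ∈ 𝔹ⁿ. -/

import Mathlib

open Matrix Polynomial

/-- The `ℓ²` operator norm of an `n×n` complex matrix. -/
noncomputable def opNorm {n : ℕ} (M : Matrix (Fin n) (Fin n) ℂ) : ℝ :=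
  ‖(Matrix.toEuclideanCLM (𝕜 := ℂ) M : EuclideanSpace ℂ (Fin n) →L[ℂ] EuclideanSpace ℂ (Fin n))‖

lemma eval_charpoly' {n : ℕ} (M : Matrix (Fin n) (Fin n) ℂ) (x : ℂ) :
    M.charpoly.eval x = (x • (1 : Matrix (Fin n) (Fin n) ℂ) - M).det := by
  rw [Matrix.charpoly, ← Polynomial.coe_evalRingHom, RingHom.map_det]
  congr 1
  ext i j
  by_cases h : i = j <;>
    simp [h, charmatrix_apply, Matrix.one_apply, Matrix.smul_apply, Matrix.diagonal_apply]

lemma root_mem_spectrum' {n : ℕ} (M : Matrix (Fin n) (Fin n) ℂ) {r : ℂ}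
    (hr : M.charpoly.IsRoot r) : r ∈ spectrum ℂ M := by
  rw [spectrum.mem_iff]
  intro h
  rw [Matrix.isUnit_iff_isUnit_det, Algebra.algebraMap_eq_smul_one, ← eval_charpoly'] at h
  rw [Polynomial.IsRoot] at hr
  rw [hr] at h
  exact not_isUnit_zero h

lemma spec_norm_le' {n : ℕ} [NeZero n] (M : Matrix (Fin n) (Fin n) ℂ) {r : ℂ}
    (hr : r ∈ spectrum ℂ M) : ‖r‖ ≤ opNorm M := by
  have h : spectrum ℂ ((Matrix.toEuclideanCLM (𝕜 := ℂ) M :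
      EuclideanSpace ℂ (Fin n) →L[ℂ] EuclideanSpace ℂ (Fin n))) = spectrum ℂ M :=
    AlgEquiv.spectrum_eq (Matrix.toEuclideanCLM (𝕜 := ℂ)) M
  rw [← h] at hr
  exact spectrum.norm_le_norm_of_mem hr

noncomputable def cvec {n : ℕ} (v : EuclideanSpace ℂ (Fin n)) : EuclideanSpace ℂ (Fin n) :=
  (WithLp.equiv 2 _).symm (fun i => starRingEnd ℂ ((WithLp.equiv 2 (Fin n → ℂ)) v i))

lemma norm_cvec {n : ℕ} (v : EuclideanSpace ℂ (Fin n)) : ‖cvec v‖ = ‖v‖ := by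
  simp [cvec, EuclideanSpace.norm_eq]

lemma opNorm_conj_le {n : ℕ} (M : Matrix (Fin n) (Fin n) ℂ) :
    opNorm (M.map (starRingEnd ℂ)) ≤ opNorm M := by
  refine ContinuousLinearMap.opNorm_le_bound _ (norm_nonneg _) fun v => ?_
  have key : Matrix.toEuclideanCLM (𝕜 := ℂ) (M.map (starRingEnd ℂ)) v
      = cvec (Matrix.toEuclideanCLM (𝕜 := ℂ) M (cvec v)) := by
    have happ : ∀ (A : Matrix (Fin n) (Fin n) ℂ) (x : EuclideanSpace ℂ (Fin n)) (i : Fin n),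
        (Matrix.toEuclideanCLM (𝕜:=ℂ) A x) i = A.mulVec x i := fun _ _ _ => rfl
    ext i
    simp [happ, cvec, Matrix.mulVec, dotProduct, map_sum, mul_comm]
  rw [key, norm_cvec]
  calc ‖Matrix.toEuclideanCLM (𝕜 := ℂ) M (cvec v)‖ ≤ opNorm M * ‖cvec v‖ :=
        ContinuousLinearMap.le_opNorm _ _
    _ = opNorm M * ‖v‖ := by rw [norm_cvec]

lemma multiset_prod_bounds {s : Multiset ℝ} {a b : ℝ} (ha : 0 ≤ a)
    (h : ∀ x ∈ s, a ≤ x ∧ x ≤ b) :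
    a ^ Multiset.card s ≤ s.prod ∧ s.prod ≤ b ^ Multiset.card s := by
  induction s using Multiset.induction with
  | empty => simp
  | cons x t ih =>
    have hx := h x (Multiset.mem_cons_self x t)
    have ih' := ih fun y hy => h y (Multiset.mem_cons_of_mem hy)
    have hb : 0 ≤ b := le_trans ha (le_trans hx.1 hx.2)
    have htp : 0 ≤ t.prod := le_trans (pow_nonneg ha _) ih'.1
    constructor
    · rw [Multiset.card_cons, Multiset.prod_cons, pow_succ']
      exact mul_le_mul hx.1 ih'.1 (pow_nonneg ha _) (le_trans ha hx.1)
    · rw [Multiset.card_cons, Multiset.prod_cons, pow_succ']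
      exact mul_le_mul hx.2 ih'.2 htp hb

/-- For a pluriharmonic map `f = h + ḡ` with second dilation `ω = Dg·(Dh)⁻¹` of operator
norm at most `κ < 1`, the real Jacobian determinant satisfies
`|det J_f| = |det Dh|² |det(I - ω·ω̄)|` and hence
`|det Dh|²(1-κ²)ⁿ ≤ |det J_f| ≤ |det Dh|²(1+κ²)ⁿ`.  Here `A = Dh(z)`, `B = Dg(z)` are the
complex Jacobian matrices at a point `z ∈ 𝔹ⁿ`. -/
theorem stmt15 {n : ℕ} (A B : Matrix (Fin n) (Fin n) ℂ) (hA : IsUnit A.det)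
    (κ : ℝ) (hκ0 : 0 ≤ κ) (hκ : κ < 1)
    (hω : opNorm (B * A⁻¹) ≤ κ)
    (J : ℝ)
    (hJ : J = ‖A.det‖ ^ 2 *
      ‖(1 - (B * A⁻¹) * ((B * A⁻¹).map (starRingEnd ℂ))).det‖) :
    J ≤ ‖A.det‖ ^ 2 * (1 + κ ^ 2) ^ n ∧
      ‖A.det‖ ^ 2 * (1 - κ ^ 2) ^ n ≤ J := by
  rcases Nat.eq_zero_or_pos n with hn | hn
  · subst hn hJ
    simp [Matrix.det_fin_zero]
  haveI : NeZero n := ⟨hn.ne'⟩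
  set ω : Matrix (Fin n) (Fin n) ℂ := B * A⁻¹ with hωdef
  set M : Matrix (Fin n) (Fin n) ℂ := ω * ω.map (starRingEnd ℂ) with hMdef
  -- operator-norm bound on M
  have hω0 : 0 ≤ opNorm ω := norm_nonneg _
  have hMnorm : opNorm M ≤ κ ^ 2 := by
    have h1 : opNorm M ≤ opNorm ω * opNorm (ω.map (starRingEnd ℂ)) := by
      show ‖(Matrix.toEuclideanCLM (𝕜 := ℂ) M : _)‖ ≤ _
      rw [hMdef, _root_.map_mul]
      exact norm_mul_le _ _
    calc opNorm M ≤ opNorm ω * opNorm (ω.map (starRingEnd ℂ)) := h1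
      _ ≤ κ * κ := mul_le_mul hω (le_trans (opNorm_conj_le ω) hω) (norm_nonneg _) hκ0
      _ = κ ^ 2 := (sq κ).symm
  -- determinant via roots of charpoly
  have hsplits : M.charpoly.Splits := IsAlgClosed.splits _
  have hcard : Multiset.card M.charpoly.roots = n := by
    rw [Polynomial.splits_iff_card_roots.mp hsplits, Matrix.charpoly_natDegree_eq_dim,
      Fintype.card_fin]
  have hfact : M.charpoly = (M.charpoly.roots.map fun a => X - C a).prod :=
    hsplits.eq_prod_roots_of_monic (Matrix.charpoly_monic M)
  have hdet : (1 - M).det = M.charpoly.eval 1 := by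
    rw [eval_charpoly', one_smul]
  have heval : M.charpoly.eval 1 = (M.charpoly.roots.map fun r => 1 - r).prod := by
    conv_lhs => rw [hfact]
    rw [Polynomial.eval_multiset_prod, Multiset.map_map]
    simp
  have habs : ‖(1 - M).det‖
      = (M.charpoly.roots.map fun r => ‖1 - r‖).prod := by
    rw [hdet, heval, ← normHom_apply, map_multiset_prod, Multiset.map_map]
    rfl
  -- bounds on each factor
  have hbound : ∀ x ∈ M.charpoly.roots.map fun r => ‖1 - r‖,
      1 - κ ^ 2 ≤ x ∧ x ≤ 1 + κ ^ 2 := by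
    intro x hx
    obtain ⟨r, hr, rfl⟩ := Multiset.mem_map.mp hx
    have hroot : M.charpoly.IsRoot r := (Polynomial.mem_roots'.mp hr).2
    have hrle : ‖r‖ ≤ κ ^ 2 :=
      le_trans (spec_norm_le' M (root_mem_spectrum' M hroot)) hMnorm
    constructor
    · have := norm_sub_norm_le (1 : ℂ) r
      simp only [norm_one] at this
      linarith
    · have := norm_sub_le (1 : ℂ) r
      simp only [norm_one] at this
      linarith
  have hκ2 : 0 ≤ 1 - κ ^ 2 := by nlinarith
  have hcard' : Multiset.card (M.charpoly.roots.map fun r => ‖1 - r‖) = n := by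
    rw [Multiset.card_map, hcard]
  obtain ⟨hlo, hhi⟩ := multiset_prod_bounds hκ2 hbound
  rw [hcard'] at hlo hhi
  rw [← habs] at hlo hhi
  have hA2 : (0:ℝ) ≤ ‖A.det‖ ^ 2 := sq_nonneg _
  subst hJ
  exact ⟨mul_le_mul_of_nonneg_left hhi hA2, mul_le_mul_of_nonneg_left hlo hA2⟩
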